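/- For every integer n ≥ 1, the number of sequences (s_1, …, s_{3n}) with each s_i ∈ {(1,0), (−1,1), (0,−1)} ⊂ ℤ², such that every partial sum s_1 + ⋯ + s_k (for 1 ≤ k ≤ 3n) has both coordinates nonnegative and the total sum s_1 + ⋯ + s_{3n} equals (0,0), is exactly 2·(3n)! / ( n! · (n+1)! · (n+2)! ). -/

import Mathlib

open Finset

namespace QW

def quad (p : ℤ × ℤ) : Prop := 0 ≤ p.1 ∧ 0 ≤ p.2

instance : DecidablePred quad := fun _ => instDecidableAnd

def steps : Finset (ℤ × ℤ) := {(1,0), (-1,1), (0,-1)}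

def V : ℕ → Finset (List (ℤ × ℤ))
  | 0 => {[]}
  | m+1 => (steps.biUnion (fun x => (V m).image (fun l => l.concat x))).filter
      (fun l => quad l.sum)

def W (m : ℕ) (p : ℤ × ℤ) : ℕ := ((V m).filter (fun l => l.sum = p)).card

lemma quad_sum_of_mem_V {m : ℕ} {l : List (ℤ × ℤ)} (h : l ∈ V m) : quad l.sum := by
  cases m with
  | zero => simp [V] at h; subst h; exact ⟨le_refl 0, le_refl 0⟩
  | succ m => exact (Finset.mem_filter.1 h).2

lemma mem_V_succ {m : ℕ} {l : List (ℤ × ℤ)} (h : l ∈ V (m+1)) :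
    ∃ x ∈ steps, ∃ l' ∈ V m, l = l'.concat x := by
  have h' := (Finset.mem_filter.1 h).1
  rw [Finset.mem_biUnion] at h'
  obtain ⟨x, hx, hl⟩ := h'
  rw [Finset.mem_image] at hl
  obtain ⟨l', hl', rfl⟩ := hl
  exact ⟨x, hx, l', hl', rfl⟩

lemma length_of_mem_V {m : ℕ} {l : List (ℤ × ℤ)} (h : l ∈ V m) : l.length = m := by
  induction m generalizing l with
  | zero => simp [V] at h; simp [h]
  | succ m IH =>
    obtain ⟨x, -, l', hl', rfl⟩ := mem_V_succ h
    simp [IH hl']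

lemma bound_of_mem_V {m : ℕ} {l : List (ℤ × ℤ)} (h : l ∈ V m) :
    l.sum.1 + 2 * l.sum.2 ≤ (m : ℤ) := by
  induction m generalizing l with
  | zero => simp [V] at h; simp [h]
  | succ m IH =>
    obtain ⟨x, hx, l', hl', rfl⟩ := mem_V_succ h
    have hb := IH hl'
    have hx1 : x.1 + 2 * x.2 ≤ 1 := by
      simp only [steps, Finset.mem_insert, Finset.mem_singleton] at hx
      rcases hx with rfl | rfl | rfl <;> norm_num
    simp only [List.concat_eq_append, List.sum_append, List.sum_cons, List.sum_nil,
      add_zero, Prod.fst_add, Prod.snd_add]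
    push_cast
    linarith

lemma W_notquad {m : ℕ} {p : ℤ × ℤ} (hp : ¬ quad p) : W m p = 0 := by
  rw [W, Finset.card_eq_zero, Finset.filter_eq_empty_iff]
  intro l hl hs
  exact hp (hs ▸ quad_sum_of_mem_V hl)

lemma W_bound {m : ℕ} {p : ℤ × ℤ} (hp : (m : ℤ) < p.1 + 2 * p.2) : W m p = 0 := by
  rw [W, Finset.card_eq_zero, Finset.filter_eq_empty_iff]
  intro l hl hs
  exact absurd (hs ▸ bound_of_mem_V hl) (not_le.2 hp)

lemma concat_injective (x : ℤ × ℤ) : Function.Injective (fun l : List (ℤ × ℤ) => l.concat x) := by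
  intro l₁ l₂ h
  have := congrArg List.dropLast h
  simpa [List.dropLast_concat] using this

lemma card_piece (m : ℕ) (p : ℤ × ℤ) (x : ℤ × ℤ) :
    ((((V m).image (fun l => l.concat x))).filter (fun l => l.sum = p)).card = W m (p - x) := by
  rw [Finset.filter_image]
  rw [Finset.card_image_of_injective _ (concat_injective x)]
  congr 1
  apply Finset.filter_congr
  intro l _
  simp only [List.concat_eq_append, List.sum_append, List.sum_cons, List.sum_nil, add_zero]
  constructor
  · intro h; rw [← h]; ring
  · intro h; rw [h]; ring

lemma W_succ (m : ℕ) (p : ℤ × ℤ) (hp : quad p) :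
    W (m+1) p = W m (p - (1,0)) + W m (p - (-1,1)) + W m (p - (0,-1)) := by
  have step1 : W (m+1) p =
      ((steps.biUnion (fun x => (V m).image (fun l => l.concat x))).filter
        (fun l => l.sum = p)).card := by
    rw [W]
    show ((V (m+1)).filter _).card = _
    rw [V, Finset.filter_filter]
    congr 1
    apply Finset.filter_congr
    intro l _
    constructor
    · exact fun h => h.2
    · exact fun h => ⟨h ▸ hp, h⟩
  rw [step1, Finset.filter_biUnion]
  rw [Finset.card_biUnion]
  · have hsum : ∀ x, (fun x => (((V m).image (fun l => l.concat x)).filter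
        (fun l => l.sum = p)).card) x = W m (p - x) := card_piece m p
    rw [steps]
    rw [Finset.sum_insert (by decide), Finset.sum_insert (by decide), Finset.sum_singleton]
    rw [card_piece, card_piece, card_piece, add_assoc]
  · intro x hx y hy hxy
    simp only [Finset.disjoint_left, Finset.mem_filter, Finset.mem_image]
    rintro l ⟨⟨l₁, -, rfl⟩, -⟩ ⟨⟨l₂, -, h⟩, -⟩
    have h' := congrArg List.getLast? h
    simp only [List.concat_eq_append, List.getLast?_append, List.getLast?_singleton] at h'
    exact hxy (Option.some_injective _ h').symm

lemma key : ∀ m u v c : ℕ, 3*c + 2*v + u = m →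
    (W m ((u:ℤ), (v:ℤ)) : ℤ) * ((c+v+u+2).factorial * (c+v+1).factorial * c.factorial) =
      (m.factorial : ℤ) * ((u:ℤ)+1) * ((u:ℤ)+(v:ℤ)+2) * ((v:ℤ)+1) := by
  intro m
  induction m using Nat.strong_induction_on with
  | _ m IH =>
  intro u v c hm
  rcases m with _ | m
  · obtain ⟨rfl, rfl, rfl⟩ : u = 0 ∧ v = 0 ∧ c = 0 := by omega
    have hW : W 0 ((0:ℤ), (0:ℤ)) = 1 := by
      rw [W, V, Finset.filter_singleton]
      rw [if_pos (by simp [Prod.ext_iff])]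
      simp
    simp only [Nat.cast_zero]
    rw [hW]
    simp [Nat.factorial]
  · have hq : quad ((u:ℤ), (v:ℤ)) := ⟨by positivity, by positivity⟩
    rw [W_succ m _ hq]
    have hpos1 : ((u:ℤ), (v:ℤ)) - (1, 0) = ((u:ℤ) - 1, (v:ℤ)) := by
      simp [Prod.ext_iff]
    have hpos2 : ((u:ℤ), (v:ℤ)) - (-1, 1) = ((u:ℤ) + 1, (v:ℤ) - 1) := by
      norm_num [Prod.ext_iff]
    have hpos3 : ((u:ℤ), (v:ℤ)) - (0, -1) = ((u:ℤ), (v:ℤ) + 1) := by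
      simp [Prod.ext_iff]
    rw [hpos1, hpos2, hpos3]
    have H1 : (W m ((u:ℤ) - 1, (v:ℤ)) : ℤ) *
        ((c+v+u+2).factorial * (c+v+1).factorial * c.factorial) =
        (m.factorial : ℤ) * (((c:ℤ)+v+u+2) * ((u:ℤ) * (((u:ℤ)+(v:ℤ)+1) * ((v:ℤ)+1)))) := by
      rcases Nat.eq_zero_or_pos u with rfl | hu
      · rw [W_notquad (by simp [quad])]
        push_cast
        ring
      · obtain ⟨u', rfl⟩ : ∃ u', u = u' + 1 := ⟨u - 1, by omega⟩
        have harg : ((u' + 1 : ℕ) : ℤ) - 1 = ((u' : ℕ) : ℤ) := by push_cast; ring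
        rw [harg]
        have hIH := IH m (Nat.lt_succ_self m) u' v c (by omega)
        have hfac : (c+v+(u'+1)+2).factorial = (c+v+u'+3) * (c+v+u'+2).factorial := by
          rw [show c+v+(u'+1)+2 = (c+v+u'+2)+1 from rfl, Nat.factorial_succ]
        rw [hfac]
        push_cast
        push_cast at hIH
        linear_combination ((c:ℤ)+v+u'+3) * hIH
    have H2 : (W m ((u:ℤ) + 1, (v:ℤ) - 1) : ℤ) *
        ((c+v+u+2).factorial * (c+v+1).factorial * c.factorial) =
        (m.factorial : ℤ) * (((c:ℤ)+v+1) * (((u:ℤ)+2) * (((u:ℤ)+(v:ℤ)+2) * (v:ℤ)))) := by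
      rcases Nat.eq_zero_or_pos v with rfl | hv
      · rw [W_notquad (by simp [quad])]
        push_cast
        ring
      · obtain ⟨v', rfl⟩ : ∃ v', v = v' + 1 := ⟨v - 1, by omega⟩
        have harg : ((v' + 1 : ℕ) : ℤ) - 1 = ((v' : ℕ) : ℤ) := by push_cast; ring
        have harg2 : ((u : ℕ) : ℤ) + 1 = ((u + 1 : ℕ) : ℤ) := by push_cast; ring
        rw [harg, harg2]
        have hIH := IH m (Nat.lt_succ_self m) (u+1) v' c (by omega)
        have hfac : (c+(v'+1)+1).factorial = (c+v'+2) * (c+v'+1).factorial := by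
          rw [show c+(v'+1)+1 = (c+v'+1)+1 from rfl, Nat.factorial_succ]
        have hfac2 : (c+(v'+1)+u+2) = (c+v'+(u+1)+2) := by omega
        rw [hfac, hfac2]
        push_cast
        push_cast at hIH
        linear_combination ((c:ℤ)+v'+2) * hIH
    have H3 : (W m ((u:ℤ), (v:ℤ) + 1) : ℤ) *
        ((c+v+u+2).factorial * (c+v+1).factorial * c.factorial) =
        (m.factorial : ℤ) * ((c:ℤ) * (((u:ℤ)+1) * (((u:ℤ)+(v:ℤ)+3) * ((v:ℤ)+2)))) := by
      rcases Nat.eq_zero_or_pos c with rfl | hc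
      · rw [W_bound (by push_cast; omega)]
        push_cast
        ring
      · obtain ⟨c', rfl⟩ : ∃ c', c = c' + 1 := ⟨c - 1, by omega⟩
        have harg : ((v : ℕ) : ℤ) + 1 = ((v + 1 : ℕ) : ℤ) := by push_cast; ring
        rw [harg]
        have hIH := IH m (Nat.lt_succ_self m) u (v+1) c' (by omega)
        have hfac : (c'+1).factorial = (c'+1) * c'.factorial := Nat.factorial_succ c'
        have hfac2 : (c'+1+v+u+2) = (c'+(v+1)+u+2) := by omega
        have hfac3 : (c'+1+v+1) = (c'+(v+1)+1) := by omega
        rw [hfac, hfac2, hfac3]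
        push_cast
        push_cast at hIH
        linear_combination ((c':ℤ)+1) * hIH
    have hmc : ((m:ℤ) + 1) = 3*(c:ℤ) + 2*(v:ℤ) + (u:ℤ) := by exact_mod_cast hm.symm
    rw [Nat.factorial_succ m]
    push_cast
    rw [hmc]
    linear_combination H1 + H2 + H3

lemma mem_V_iff {m : ℕ} {l : List (ℤ × ℤ)} :
    l ∈ V m ↔ l.length = m ∧ (∀ x ∈ l, x ∈ steps) ∧
      (∀ k, 1 ≤ k → k ≤ m → quad ((l.take k).sum)) := by
  induction m generalizing l with
  | zero =>
    constructor
    · intro h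
      have : l = [] := by simpa [V] using h
      subst this
      exact ⟨rfl, by simp, fun k hk1 hk2 => by omega⟩
    · rintro ⟨h, -, -⟩
      rw [List.length_eq_zero_iff] at h
      subst h
      simp [V]
  | succ m IH =>
    constructor
    · intro h
      obtain ⟨x, hx, l', hl', rfl⟩ := mem_V_succ h
      obtain ⟨hlen, hmem, hpre⟩ := IH.1 hl'
      have hq := quad_sum_of_mem_V h
      refine ⟨by simp [hlen], ?_, ?_⟩
      · intro y hy
        rw [List.concat_eq_append, List.mem_append] at hy
        rcases hy with hy | hy
        · exact hmem y hy
        · rw [List.mem_singleton] at hy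
          subst hy
          exact hx
      · intro k hk1 hk2
        rcases Nat.lt_or_ge k (m+1) with hk | hk
        · rw [List.concat_eq_append, List.take_append_of_le_length (by rw [hlen]; omega)]
          exact hpre k hk1 (by omega)
        · have hkm : k = m + 1 := by omega
          subst hkm
          rw [List.take_of_length_le (by simp [hlen])]
          exact hq
    · rintro ⟨hlen, hmem, hpre⟩
      have hne : l ≠ [] := by
        intro h
        subst h
        simp at hlen
      have heq := List.dropLast_append_getLast hne
      have hV : l.dropLast ∈ V m := by
        rw [IH]
        refine ⟨by simp [List.length_dropLast, hlen], ?_, ?_⟩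
        · exact fun y hy => hmem y ((List.dropLast_sublist l).subset hy)
        · intro k hk1 hk2
          have : l.dropLast.take k = l.take k := by
            rw [List.dropLast_eq_take, hlen, List.take_take]
            congr 1
            omega
          rw [this]
          exact hpre k hk1 (by omega)
      rw [V, Finset.mem_filter]
      constructor
      · rw [Finset.mem_biUnion]
        refine ⟨l.getLast hne, hmem _ (List.getLast_mem hne), ?_⟩
        rw [Finset.mem_image]
        exact ⟨l.dropLast, hV, by rw [List.concat_eq_append, heq]⟩
      · have := hpre (m+1) (by omega) le_rfl
        rwa [List.take_of_length_le (by rw [hlen])] at this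

lemma card_walks (m : ℕ) :
    Nat.card {s : Fin m → ℤ × ℤ //
        (∀ i, s i ∈ ({(1, 0), (-1, 1), (0, -1)} : Set (ℤ × ℤ))) ∧
        (∀ k, 1 ≤ k → k ≤ m →
          0 ≤ (∑ i ∈ Finset.univ.filter (fun i : Fin m => (i : ℕ) < k), s i).1 ∧
          0 ≤ (∑ i ∈ Finset.univ.filter (fun i : Fin m => (i : ℕ) < k), s i).2) ∧
        (∑ i, s i = 0)} = W m ((0:ℤ), (0:ℤ)) := by
  classical
  rw [W, ← Nat.card_eq_finsetCard]
  apply Nat.card_congr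
  refine Equiv.ofBijective (fun s => ⟨List.ofFn s.1, ?_⟩) ⟨?_, ?_⟩
  · obtain ⟨s, h1, h2, h3⟩ := s
    rw [Finset.mem_filter, mem_V_iff]
    refine ⟨⟨by simp, ?_, ?_⟩, ?_⟩
    · intro x hx
      rw [List.mem_ofFn] at hx
      obtain ⟨i, rfl⟩ := hx
      have := h1 i
      simpa [steps] using this
    · intro k hk1 hk2
      rw [List.sum_take_ofFn]
      exact ⟨(h2 k hk1 hk2).1, (h2 k hk1 hk2).2⟩
    · rw [List.sum_ofFn, h3]
      rfl
  · intro s₁ s₂ h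
    rw [Subtype.mk.injEq] at h
    exact Subtype.ext (List.ofFn_injective h)
  · rintro ⟨l, hl⟩
    rw [Finset.mem_filter, mem_V_iff] at hl
    obtain ⟨⟨hlen, hmem, hpre⟩, hsum⟩ := hl
    refine ⟨⟨fun i => l.get (Fin.cast hlen.symm i), ?_, ?_, ?_⟩, ?_⟩
    · intro i
      have hmm : l.get (Fin.cast hlen.symm i) ∈ l := l.get_mem _
      have := hmem _ hmm
      simpa [steps] using this
    · intro k hk1 hk2
      have hofn : List.ofFn (fun i : Fin m => l.get (Fin.cast hlen.symm i)) = l := by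
        apply List.ext_get (by simp [hlen])
        intro j h1 h2
        simp
      rw [← List.sum_take_ofFn, hofn]
      exact ⟨(hpre k hk1 hk2).1, (hpre k hk1 hk2).2⟩
    · have hofn : List.ofFn (fun i : Fin m => l.get (Fin.cast hlen.symm i)) = l := by
        apply List.ext_get (by simp [hlen])
        intro j h1 h2
        simp
      rw [← List.sum_ofFn, hofn]  -- goal : ∑ i, _ = 0 ; sum_ofFn : (ofFn f).sum = ∑ i, f i
      rw [hsum]
      rfl
    · apply Subtype.ext
      apply List.ext_get (by simp [hlen])
      intro j h1 h2
      simp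

end QW

theorem quadrant_walk_count (n : ℕ) (hn : 1 ≤ n) :
    Nat.card {s : Fin (3 * n) → ℤ × ℤ //
        (∀ i, s i ∈ ({(1, 0), (-1, 1), (0, -1)} : Set (ℤ × ℤ))) ∧
        (∀ k, 1 ≤ k → k ≤ 3 * n →
          0 ≤ (∑ i ∈ Finset.univ.filter (fun i : Fin (3 * n) => (i : ℕ) < k), s i).1 ∧
          0 ≤ (∑ i ∈ Finset.univ.filter (fun i : Fin (3 * n) => (i : ℕ) < k), s i).2) ∧
        (∑ i, s i = 0)} =
      2 * Nat.factorial (3 * n) /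
        (Nat.factorial n * Nat.factorial (n + 1) * Nat.factorial (n + 2)) := by
  rw [QW.card_walks (3 * n)]
  have hkey := QW.key (3 * n) 0 0 n (by omega)
  norm_num at hkey
  have hnat : QW.W (3 * n) ((0:ℤ), (0:ℤ)) * (Nat.factorial n * Nat.factorial (n+1) * Nat.factorial (n+2)) = 2 * Nat.factorial (3 * n) := by
    have h0 : ((0:ℤ), (0:ℤ)) = (0 : ℤ × ℤ) := rfl
    rw [h0]
    have : (↑(QW.W (3 * n) (0 : ℤ × ℤ) * (Nat.factorial n * Nat.factorial (n+1) * Nat.factorial (n+2))) : ℤ) = ↑(2 * Nat.factorial (3 * n)) := by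
      push_cast
      push_cast at hkey
      linear_combination hkey
    exact_mod_cast this
  symm
  apply Nat.div_eq_of_eq_mul_left
  · positivity
  · omega
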